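/- (Easy direction of hypergraph Cheeger Inequality) The second smallest eigenvalue λ of L_sym = Π^{-1/2} L Π^{-1/2} satisfies λ ≤ 2Φ(H), where Φ(H) = min over proper nonempty S ⊆ V of Φ(S). -/

import Mathlib

open Finset Matrix

/-- Easy direction of the hypergraph Cheeger inequality: the second smallest
eigenvalue `λ` of `L_sym` (characterized variationally as the minimum of the
Rayleigh quotient `xᵀLx / xᵀΠx` over nonzero `x` with `x ⊥ Π𝟙`) satisfies
`λ ≤ 2 Φ(H)`. -/
theorem cheeger_easy_direction
    {V : Type*} [Fintype V] [DecidableEq V]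
    (P : Matrix V V ℝ) (hnn : ∀ u v, 0 ≤ P u v) (hrow : ∀ u, ∑ v, P u v = 1)
    (φ : V → ℝ) (hφpos : ∀ u, 0 < φ u) (hφsum : ∑ u, φ u = 1)
    (hstat : ∀ v, ∑ u, φ u * P u v = φ v)
    (L : Matrix V V ℝ)
    (hL : L = Matrix.diagonal φ -
      (2⁻¹ : ℝ) • (Matrix.diagonal φ * P + Pᵀ * Matrix.diagonal φ))
    (lam : ℝ)
    (hlam : IsLeast {r : ℝ | ∃ x : V → ℝ, x ≠ 0 ∧ (∑ u, φ u * x u) = 0 ∧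
      r = (x ⬝ᵥ L.mulVec x) / (∑ u, φ u * (x u) ^ 2)} lam)
    (PhiH : ℝ)
    (hPhiH : IsLeast {r : ℝ | ∃ S : Finset V, S.Nonempty ∧ S ≠ Finset.univ ∧
      r = (∑ u ∈ S, ∑ v ∈ Sᶜ, φ u * P u v) /
            min (∑ u ∈ S, φ u) (∑ u ∈ Sᶜ, φ u)} PhiH) :
    lam ≤ 2 * PhiH := by
  obtain ⟨S, hSne, hSuniv, hPhi⟩ := hPhiH.1
  set a : ℝ := ∑ u ∈ S, φ u with ha
  set b : ℝ := ∑ u ∈ Sᶜ, φ u with hb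
  have hab : a + b = 1 := by
    rw [ha, hb, Finset.sum_add_sum_compl]; exact hφsum
  have hapos : 0 < a := Finset.sum_pos (fun u _ => hφpos u) hSne
  have hbpos : 0 < b :=
    Finset.sum_pos (fun u _ => hφpos u) (by
      rw [Finset.nonempty_iff_ne_empty]; simpa using hSuniv)
  -- entrywise formula for L
  have hLent : ∀ u v, L u v =
      (if u = v then φ u else 0) - 2⁻¹ * (φ u * P u v + P v u * φ v) := by
    intro u v
    rw [hL]
    simp [Matrix.sub_apply, Matrix.smul_apply, Matrix.add_apply,
      Matrix.diagonal_mul, Matrix.mul_diagonal, Matrix.diagonal_apply,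
      Matrix.transpose_apply, smul_eq_mul]
    ring
  -- row sums of L vanish
  have hLrow : ∀ u, ∑ v, L u v = 0 := by
    intro u
    have h1 : ∑ v, (if u = v then φ u else 0) = φ u := by simp
    have h2 : ∑ v, φ u * P u v = φ u := by
      rw [← Finset.mul_sum, hrow, mul_one]
    have h3 : ∑ v, P v u * φ v = φ u := by
      rw [← hstat u]; exact Finset.sum_congr rfl fun v _ => mul_comm _ _
    simp only [hLent, Finset.sum_sub_distrib, ← Finset.mul_sum,
      Finset.sum_add_distrib, h1, h2, h3]
    ring
  -- column sums of L vanish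
  have hLcol : ∀ v, ∑ u, L u v = 0 := by
    intro v
    have h1 : ∑ u, (if u = v then φ u else 0) = φ v := by simp
    have h2 : ∑ u, φ u * P u v = φ v := hstat v
    have h3 : ∑ u, P v u * φ v = φ v := by
      rw [← Finset.sum_mul]
      have : ∑ u, P v u = 1 := hrow v
      rw [this, one_mul]
    simp only [hLent, Finset.sum_sub_distrib, ← Finset.mul_sum,
      Finset.sum_add_distrib, h1, h2, h3]
    ring
  -- indicator and test vector
  set χ : V → ℝ := fun u => if u ∈ S then (1 : ℝ) else 0 with hχ
  set x : V → ℝ := fun u => χ u - a with hx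
  have hφχ : ∑ u, φ u * χ u = a := by
    simp [hχ, mul_ite, Finset.sum_ite_mem, ha]
  have horth : ∑ u, φ u * x u = 0 := by
    simp only [hx, mul_sub, Finset.sum_sub_distrib, ← Finset.sum_mul, hφχ,
      hφsum]
    ring
  have hxne : x ≠ 0 := by
    obtain ⟨u, hu⟩ := hSne
    intro h
    have : x u = 0 := congrFun h u
    simp only [hx, hχ, hu, if_pos] at this
    have : a = 1 := by linarith
    linarith
  -- denominator
  have hden : ∑ u, φ u * (x u) ^ 2 = a * b := by
    have hχsq : ∀ u, (χ u) ^ 2 = χ u := by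
      intro u; simp only [hχ]; split <;> norm_num
    have : ∀ u, φ u * (x u) ^ 2 =
        φ u * χ u - 2 * a * (φ u * χ u) + a ^ 2 * φ u := by
      intro u
      simp only [hx]
      linear_combination φ u * hχsq u
    rw [Finset.sum_congr rfl fun u _ => this u]
    simp only [Finset.sum_add_distrib, Finset.sum_sub_distrib,
      ← Finset.mul_sum, hφχ, hφsum]
    nlinarith [hab]
  -- numerator
  set cut : ℝ := ∑ u ∈ S, ∑ v ∈ Sᶜ, φ u * P u v with hcut
  have hcutnn : 0 ≤ cut := by
    apply Finset.sum_nonneg; intro u _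
    exact Finset.sum_nonneg fun v _ => mul_nonneg (hφpos u).le (hnn u v)
  -- the two cuts agree
  have hcut' : ∑ u ∈ S, ∑ v ∈ Sᶜ, P v u * φ v = cut := by
    have hA : ∑ u ∈ S, ∑ v ∈ S, P v u * φ v = ∑ u ∈ S, ∑ v ∈ S, φ u * P u v := by
      rw [Finset.sum_comm]
      exact Finset.sum_congr rfl fun u _ =>
        Finset.sum_congr rfl fun v _ => mul_comm _ _
    have h1 : ∀ u ∈ S, ∑ v ∈ S, P v u * φ v + ∑ v ∈ Sᶜ, P v u * φ v = φ u := by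
      intro u _
      rw [Finset.sum_add_sum_compl, ← hstat u]
      exact Finset.sum_congr rfl fun v _ => mul_comm _ _
    have h2 : ∀ u ∈ S, ∑ v ∈ S, φ u * P u v + ∑ v ∈ Sᶜ, φ u * P u v = φ u := by
      intro u _
      rw [Finset.sum_add_sum_compl, ← Finset.mul_sum, hrow, mul_one]
    have e1 : ∑ u ∈ S, ∑ v ∈ Sᶜ, P v u * φ v
        = a - ∑ u ∈ S, ∑ v ∈ S, P v u * φ v := by
      rw [ha, ← Finset.sum_sub_distrib]
      refine Finset.sum_congr rfl fun u hu => ?_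
      have := h1 u hu; linarith
    have e2 : cut = a - ∑ u ∈ S, ∑ v ∈ S, φ u * P u v := by
      rw [hcut, ha, ← Finset.sum_sub_distrib]
      refine Finset.sum_congr rfl fun u hu => ?_
      have := h2 u hu; linarith
    rw [e1, e2, hA]
  have hnum : x ⬝ᵥ L.mulVec x = cut := by
    have hrow' : ∀ u, ∑ v, L u v * x v = ∑ v ∈ S, L u v := by
      intro u
      have : ∀ v, L u v * x v = L u v * χ v - a * L u v := by
        intro v; simp only [hx]; ring
      rw [Finset.sum_congr rfl fun v _ => this v, Finset.sum_sub_distrib,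
        ← Finset.mul_sum, hLrow, mul_zero, sub_zero]
      simp [hχ, mul_ite, Finset.sum_ite_mem]
    have hQ : x ⬝ᵥ L.mulVec x = ∑ u ∈ S, ∑ v ∈ S, L u v := by
      simp only [dotProduct, Matrix.mulVec, dotProduct]
      rw [Finset.sum_congr rfl fun u _ => by rw [hrow' u]]
      have : ∀ u, x u * ∑ v ∈ S, L u v
          = χ u * ∑ v ∈ S, L u v - a * ∑ v ∈ S, L u v := by
        intro u; simp only [hx]; ring
      rw [Finset.sum_congr rfl fun u _ => this u, Finset.sum_sub_distrib]
      have hz : ∑ u, a * ∑ v ∈ S, L u v = 0 := by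
        simp only [← Finset.mul_sum]
        rw [show ∑ i, ∑ v ∈ S, L i v = ∑ v ∈ S, ∑ i, L i v from Finset.sum_comm]
        have : ∀ v ∈ S, ∑ u, L u v = 0 := fun v _ => hLcol v
        rw [Finset.sum_congr rfl this]
        simp
      rw [hz, sub_zero]
      simp [hχ, ite_mul, Finset.sum_ite_mem]
    rw [hQ]
    -- now ∑_{u∈S}∑_{v∈S} L u v = cut
    have hsplit : ∀ u ∈ S, ∑ v ∈ S, L u v = - ∑ v ∈ Sᶜ, L u v := by
      intro u _
      have := Finset.sum_add_sum_compl S (fun v => L u v)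
      rw [hLrow u] at this
      linarith
    rw [Finset.sum_congr rfl hsplit]
    have hoff : ∀ u ∈ S, ∀ v ∈ Sᶜ, L u v
        = -(2⁻¹ * (φ u * P u v + P v u * φ v)) := by
      intro u hu v hv
      have huv : u ≠ v := fun h => (Finset.mem_compl.mp hv) (h ▸ hu)
      rw [hLent u v, if_neg huv]; ring
    have : ∑ u ∈ S, -∑ v ∈ Sᶜ, L u v
        = ∑ u ∈ S, ∑ v ∈ Sᶜ, 2⁻¹ * (φ u * P u v + P v u * φ v) := by
      refine Finset.sum_congr rfl fun u hu => ?_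
      rw [← Finset.sum_neg_distrib]
      refine Finset.sum_congr rfl fun v hv => ?_
      rw [hoff u hu v hv]; ring
    rw [this]
    have : ∑ u ∈ S, ∑ v ∈ Sᶜ, 2⁻¹ * (φ u * P u v + P v u * φ v)
        = 2⁻¹ * (cut + ∑ u ∈ S, ∑ v ∈ Sᶜ, P v u * φ v) := by
      rw [hcut]
      simp only [Finset.mul_sum, ← Finset.sum_add_distrib, mul_add]
    rw [this, hcut']
    ring
  -- lam is at most the Rayleigh quotient of x
  have hle : lam ≤ cut / (a * b) := by
    have : cut / (a * b) ∈ {r : ℝ | ∃ x : V → ℝ, x ≠ 0 ∧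
        (∑ u, φ u * x u) = 0 ∧
        r = (x ⬝ᵥ L.mulVec x) / (∑ u, φ u * (x u) ^ 2)} := by
      exact ⟨x, hxne, horth, by rw [hnum, hden]⟩
    exact hlam.2 this
  -- finish: cut/(ab) ≤ 2 cut / min a b
  have hmin : min a b ≤ 2 * (a * b) := by
    rcases le_total a b with h | h
    · rw [min_eq_left h]; nlinarith
    · rw [min_eq_right h]; nlinarith
  have hminpos : 0 < min a b := lt_min hapos hbpos
  have habpos : 0 < a * b := mul_pos hapos hbpos
  have h2 : cut / (a * b) ≤ 2 * (cut / min a b) := by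
    rw [mul_div_assoc'] at *
    rw [div_le_div_iff₀ habpos hminpos]
    nlinarith
  calc lam ≤ cut / (a * b) := hle
    _ ≤ 2 * (cut / min a b) := h2
    _ = 2 * PhiH := by rw [hPhi]
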